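/- Let X be a nonempty set, B a nonempty set, 𝓕 ⊆ B^X a family of maps from X to B, T : 𝓕 → 𝓕, and 𝓗 a family of subsets of X. Assume: (i) 𝓗 covers X; (ii) for all H₁,H₂ ∈ 𝓗, the union of all H ∈ 𝓗 with H ⊆ H₁ ∩ H₂ equals H₁ ∩ H₂; (iii) if a map x : X → B satisfies x↾H ∈ 𝓕_H for every H ∈ 𝓗, then x ∈ 𝓕; (iv) T is restrictable to 𝓕_H for every H ∈ 𝓗; (v) for every H ∈ 𝓗 the natural restriction T_H has a unique fixed point x_H ∈ 𝓕_H. Then T has a unique fixed point in 𝓕. -/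
import Mathlib


/-- Extension lemma: local unique fixed point properties glue to a global one.
Here `F ⊆ B^X` is a family of maps, `T` maps `F` into itself, and `HH` is a family of
subsets of `X` satisfying the covering and compatibility conditions (i)–(v).
Membership of a restriction `x↾H` in `F_H = {u↾H : u ∈ F}` is expressed as
`∃ u ∈ F, Set.EqOn x u H`; restrictability and the fixed point conditions for the
natural restrictions `T_H` are expressed via `Set.EqOn` accordingly. -/
theorem extension_lemma_unique_fixed_point {X B : Type*} [Nonempty X] [Nonempty B]
    (F : Set (X → B)) (T : (X → B) → (X → B)) (hT : ∀ x ∈ F, T x ∈ F)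
    (HH : Set (Set X))
    -- (i) `HH` is a cover of `X`
    (hcover : ⋃₀ HH = Set.univ)
    -- (ii) members of `HH` contained in `H₁ ∩ H₂` cover `H₁ ∩ H₂`
    (hinter : ∀ H₁ ∈ HH, ∀ H₂ ∈ HH, ⋃₀ {H ∈ HH | H ⊆ H₁ ∩ H₂} = H₁ ∩ H₂)
    -- (iii) if `x↾H ∈ F_H` for all `H ∈ HH`, then `x ∈ F`
    (hglue : ∀ x : X → B, (∀ H ∈ HH, ∃ u ∈ F, Set.EqOn x u H) → x ∈ F)
    -- (iv) `T` is restrictable to `F_H` for all `H ∈ HH`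
    (hrestr : ∀ H ∈ HH, ∀ x ∈ F, ∀ y ∈ F, Set.EqOn x y H → Set.EqOn (T x) (T y) H)
    -- (v) for each `H ∈ HH`, the natural restriction `T_H` has a unique fixed point in `F_H`
    (hfix : ∀ H ∈ HH,
      (∃ x ∈ F, Set.EqOn (T x) x H) ∧
      (∀ x ∈ F, ∀ y ∈ F, Set.EqOn (T x) x H → Set.EqOn (T y) y H → Set.EqOn x y H)) :
    ∃! x : X → B, x ∈ F ∧ T x = x := by
  classical
  -- choose local fixed points
  choose! xH hxHF hxHfix using fun H (hH : H ∈ HH) => (hfix H hH).1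
  -- well-definedness at common points
  have hcompat : ∀ H₁ ∈ HH, ∀ H₂ ∈ HH, ∀ t ∈ H₁ ∩ H₂, xH H₁ t = xH H₂ t := by
    intro H₁ h₁ H₂ h₂ t ht
    have : t ∈ ⋃₀ {H ∈ HH | H ⊆ H₁ ∩ H₂} := by rw [hinter H₁ h₁ H₂ h₂]; exact ht
    obtain ⟨H, ⟨hH, hsub⟩, htH⟩ := this
    have h1 : Set.EqOn (T (xH H₁)) (xH H₁) H :=
      fun s hs => hxHfix H₁ h₁ ((hsub hs).1)
    have h2 : Set.EqOn (T (xH H₂)) (xH H₂) H :=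
      fun s hs => hxHfix H₂ h₂ ((hsub hs).2)
    exact (hfix H hH).2 _ (hxHF H₁ h₁) _ (hxHF H₂ h₂) h1 h2 htH
  -- choose a cover member for each point
  have hmem : ∀ t : X, ∃ H ∈ HH, t ∈ H := by
    intro t
    have : t ∈ ⋃₀ HH := by rw [hcover]; trivial
    obtain ⟨H, hH, ht⟩ := this
    exact ⟨H, hH, ht⟩
  choose Ht hHt hHtmem using hmem
  set x : X → B := fun t => xH (Ht t) t with hx
  have hagree : ∀ H ∈ HH, Set.EqOn x (xH H) H := by
    intro H hH t ht
    exact hcompat (Ht t) (hHt t) H hH t ⟨hHtmem t, ht⟩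
  have hxF : x ∈ F := hglue x (fun H hH => ⟨xH H, hxHF H hH, hagree H hH⟩)
  have hTx : T x = x := by
    funext t
    have hH := hHt t
    have h1 : Set.EqOn (T x) (T (xH (Ht t))) (Ht t) :=
      hrestr _ hH _ hxF _ (hxHF _ hH) (hagree _ hH)
    calc T x t = T (xH (Ht t)) t := h1 (hHtmem t)
      _ = xH (Ht t) t := hxHfix _ hH (hHtmem t)
      _ = x t := rfl
  refine ⟨x, ⟨hxF, hTx⟩, ?_⟩
  rintro y ⟨hyF, hTy⟩
  funext t
  have hH := hHt t
  have : Set.EqOn y x (Ht t) := by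
    refine (hfix _ hH).2 y hyF x hxF ?_ ?_
    · intro s hs; rw [hTy]
    · intro s hs; rw [hTx]
  exact this (hHtmem t)
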